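/- Let Q and B be n×m complex matrices with SVDs Q = X_Q Σ_Q Y_Q and B = X_B Σ_B Y_B, and let p > 0 satisfy σ_i(Q)² ≥ p·σ_i(B)² for every i, where σ₁ ≥ σ₂ ≥ … are the singular values in decreasing order. Then N := √p X_B Σ_B Σ_Q‡ X_Q† is a contraction, and with the unitary V defined by Vᵀ = Y_Q† Y_B one has N Q Vᵀ = √p B; i.e., (N ⊗ V)|Q⟩⟩ = √p |B⟩⟩, a pure LOCC transformation of |Q⟩⟩ into |B⟩⟩ occurring with probability p. -/
import Mathlib

open Matrix

/-- `M` is a contraction: its operator norm (as an operator on `EuclideanSpace ℂ (Fin n)`,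
i.e. the l2 operator norm) is at most 1. -/
def IsContraction {n : ℕ} (M : Matrix (Fin n) (Fin n) ℂ) : Prop :=
  ‖Matrix.toEuclideanCLM (𝕜 := ℂ) M‖ ≤ 1

/-- The `n × m` "diagonal" matrix with `σ 0, σ 1, …` on the main diagonal. -/
def svdDiag (n m : ℕ) (σ : ℕ → ℝ) : Matrix (Fin n) (Fin m) ℂ :=
  Matrix.of fun i j => if (i : ℕ) = (j : ℕ) then (σ (i : ℕ) : ℂ) else 0

/-- The Moore–Penrose pseudoinverse of `svdDiag n m σ`: diagonal with entries `σᵢ⁻¹`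
where `σᵢ ≠ 0` and `0` where `σᵢ = 0` (note `(0 : ℝ)⁻¹ = 0`). -/
noncomputable def svdDiagPinv (n m : ℕ) (σ : ℕ → ℝ) : Matrix (Fin m) (Fin n) ℂ :=
  Matrix.of fun i j => if (i : ℕ) = (j : ℕ) then ((σ (i : ℕ))⁻¹ : ℂ) else 0

/-- `O = X Σ Y` is a singular value decomposition of `O` : `X`, `Y` unitary and `Σ` the
diagonal matrix of the singular values `σ 0 ≥ σ 1 ≥ … ≥ 0` in decreasing order
(padded with zeros beyond `min n m`). -/
def IsSVD {n m : ℕ} (O : Matrix (Fin n) (Fin m) ℂ) (X : Matrix (Fin n) (Fin n) ℂ)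
    (σ : ℕ → ℝ) (Y : Matrix (Fin m) (Fin m) ℂ) : Prop :=
  X ∈ Matrix.unitaryGroup (Fin n) ℂ ∧ Y ∈ Matrix.unitaryGroup (Fin m) ℂ ∧
  (∀ i, 0 ≤ σ i) ∧ Antitone σ ∧ (∀ i, min n m ≤ i → σ i = 0) ∧
  O = X * svdDiag n m σ * Y

namespace ProbStepAux
open scoped Matrix.Norms.L2Operator

lemma sum_ite_cast {m : ℕ} (f : Fin m → ℂ) (i : ℕ) :
    (∑ k : Fin m, if i = (k : ℕ) then f k else 0) =
      if h : i < m then f ⟨i, h⟩ else 0 := by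
  split_ifs with h
  · rw [Finset.sum_eq_single (⟨i, h⟩ : Fin m)]
    · simp
    · intro b _ hb
      rw [if_neg]
      intro hc
      exact hb (Fin.ext hc.symm)
    · simp
  · apply Finset.sum_eq_zero
    intro k _
    rw [if_neg]
    intro hc
    exact h (hc ▸ k.isLt)

lemma norm_unitary_le {n : ℕ} (U : Matrix (Fin n) (Fin n) ℂ)
    (hU : U ∈ Matrix.unitaryGroup (Fin n) ℂ) : ‖U‖ ≤ 1 := by
  have h2 : Uᴴ * U = 1 := by
    rw [Matrix.mem_unitaryGroup_iff'] at hU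
    simpa [Matrix.star_eq_conjTranspose] using hU
  have h1 : ‖Uᴴ * U‖ ≤ 1 := by
    rw [h2, Matrix.cstar_norm_def, _root_.map_one]
    exact ContinuousLinearMap.norm_id_le
  rw [Matrix.l2_opNorm_conjTranspose_mul_self] at h1
  nlinarith [norm_nonneg U]

lemma norm_diagonal_le {n : ℕ} (d : Fin n → ℂ) (c : ℝ) (hc : 0 ≤ c)
    (h : ∀ i, ‖d i‖ ≤ c) : ‖(Matrix.diagonal d)‖ ≤ c := by
  rw [Matrix.cstar_norm_def]
  apply ContinuousLinearMap.opNorm_le_bound _ hc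
  intro x
  have hx : ∀ i, (toEuclideanCLM (𝕜 := ℂ) (Matrix.diagonal d) x) i = d i * x i := by
    intro i
    show ((Matrix.diagonal d) *ᵥ (fun j => x j)) i = d i * x i
    rw [Matrix.mulVec_diagonal]
  calc ‖toEuclideanCLM (𝕜 := ℂ) (Matrix.diagonal d) x‖
      = Real.sqrt (∑ i, ‖d i * x i‖ ^ 2) := by
        rw [EuclideanSpace.norm_eq]
        congr 1
        refine Finset.sum_congr rfl fun i _ => by rw [hx i]
    _ ≤ Real.sqrt (∑ i, c ^ 2 * ‖x i‖ ^ 2) := by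
        apply Real.sqrt_le_sqrt
        refine Finset.sum_le_sum fun i _ => ?_
        rw [norm_mul, mul_pow]
        exact mul_le_mul_of_nonneg_right (pow_le_pow_left₀ (norm_nonneg _) (h i) 2)
          (by positivity)
    _ = c * ‖x‖ := by
        rw [← Finset.mul_sum, Real.sqrt_mul (by positivity), EuclideanSpace.norm_eq,
          Real.sqrt_sq hc]

lemma diag_mul_pinv {n m : ℕ} (σB σQ : ℕ → ℝ) :
    svdDiag n m σB * svdDiagPinv n m σQ =
      Matrix.diagonal (fun i : Fin n =>
        if (i : ℕ) < m then ((σB (i : ℕ) : ℂ) * ((σQ (i : ℕ) : ℂ))⁻¹) else 0) := by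
  ext i j
  rw [Matrix.mul_apply, Matrix.diagonal_apply]
  simp only [svdDiag, svdDiagPinv, Matrix.of_apply, ite_mul, zero_mul]
  rw [sum_ite_cast (fun k : Fin m =>
    (σB (i : ℕ) : ℂ) * (if (k : ℕ) = (j : ℕ) then ((σQ (k : ℕ) : ℂ))⁻¹ else 0)) (i : ℕ)]
  by_cases h : (i : ℕ) < m
  · rw [dif_pos h]
    by_cases hij : i = j
    · subst hij
      simp [h]
    · have : (i : ℕ) ≠ (j : ℕ) := fun hc => hij (Fin.ext hc)
      simp [hij, this]
  · rw [dif_neg h]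
    by_cases hij : i = j
    · subst hij
      simp [h]
    · simp [hij]

lemma diag_prod_eq {n m : ℕ} (σB σQ : ℕ → ℝ) (h0 : ∀ i, σQ i = 0 → σB i = 0) :
    Matrix.diagonal (fun i : Fin n =>
        if (i : ℕ) < m then ((σB (i : ℕ) : ℂ) * ((σQ (i : ℕ) : ℂ))⁻¹) else 0) *
      svdDiag n m σQ = svdDiag n m σB := by
  ext i j
  rw [Matrix.diagonal_mul]
  simp only [svdDiag, Matrix.of_apply]
  by_cases hij : (i : ℕ) = (j : ℕ)
  · rw [if_pos hij, if_pos hij]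
    have him : (i : ℕ) < m := hij ▸ j.isLt
    rw [if_pos him]
    by_cases hq : σQ (i : ℕ) = 0
    · simp [hq, h0 _ hq]
    · have hq' : ((σQ (i : ℕ) : ℝ) : ℂ) ≠ 0 := Complex.ofReal_ne_zero.mpr hq
      field_simp
  · simp [hij]

end ProbStepAux

open ProbStepAux
open scoped Matrix.Norms.L2Operator

/-- **Probabilistic step of the protocol.** Given SVDs `Q = X_Q Σ_Q Y_Q`, `B = X_B Σ_B Y_B` and
`p > 0` with `σᵢ(Q)² ≥ p σᵢ(B)²` for all `i`, the matrix `N = √p X_B Σ_B Σ_Q‡ X_Q†` is a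
contraction and, with the unitary `V` defined by `Vᵀ = Y_Q† Y_B`, one has `N Q Vᵀ = √p B`,
i.e. `(N ⊗ V)|Q⟩⟩ = √p |B⟩⟩`: a pure LOCC transformation of `|Q⟩⟩` into `|B⟩⟩` with
probability `p`. -/
theorem probabilistic_step {n m : ℕ} (Q B : Matrix (Fin n) (Fin m) ℂ)
    (XQ : Matrix (Fin n) (Fin n) ℂ) (σQ : ℕ → ℝ) (YQ : Matrix (Fin m) (Fin m) ℂ)
    (hQ : IsSVD Q XQ σQ YQ)
    (XB : Matrix (Fin n) (Fin n) ℂ) (σB : ℕ → ℝ) (YB : Matrix (Fin m) (Fin m) ℂ)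
    (hB : IsSVD B XB σB YB)
    (p : ℝ) (hp : 0 < p) (hσ : ∀ i, p * σB i ^ 2 ≤ σQ i ^ 2)
    (N : Matrix (Fin n) (Fin n) ℂ)
    (hN : N = Real.sqrt p • (XB * svdDiag n m σB * svdDiagPinv n m σQ * XQᴴ))
    (V : Matrix (Fin m) (Fin m) ℂ) (hV : Vᵀ = YQᴴ * YB) :
    IsContraction N ∧ V ∈ Matrix.unitaryGroup (Fin m) ℂ ∧
    N * Q * Vᵀ = Real.sqrt p • B := by
  obtain ⟨hXQ, hYQ, hσQ0, -, -, hQeq⟩ := hQ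
  obtain ⟨hXB, hYB, hσB0, -, -, hBeq⟩ := hB
  -- basic unitarity equations
  have hXQ' : XQᴴ * XQ = 1 := by
    rw [Matrix.mem_unitaryGroup_iff'] at hXQ
    simpa [Matrix.star_eq_conjTranspose] using hXQ
  have hYQ1 : YQ * YQᴴ = 1 := by
    rw [Matrix.mem_unitaryGroup_iff] at hYQ
    simpa [Matrix.star_eq_conjTranspose] using hYQ
  have hYQ2 : YQᴴ * YQ = 1 := by
    rw [Matrix.mem_unitaryGroup_iff'] at hYQ
    simpa [Matrix.star_eq_conjTranspose] using hYQ
  have hYB1 : YB * YBᴴ = 1 := by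
    rw [Matrix.mem_unitaryGroup_iff] at hYB
    simpa [Matrix.star_eq_conjTranspose] using hYB
  have hYB2 : YBᴴ * YB = 1 := by
    rw [Matrix.mem_unitaryGroup_iff'] at hYB
    simpa [Matrix.star_eq_conjTranspose] using hYB
  -- vanishing implication
  have h0 : ∀ i, σQ i = 0 → σB i = 0 := by
    intro i hq
    have h1 := hσ i
    rw [hq] at h1
    have : σB i ^ 2 ≤ 0 := by nlinarith
    nlinarith [hσB0 i, sq_nonneg (σB i)]
  -- the diagonal middle factor
  set d : Fin n → ℂ := fun i =>
    if (i : ℕ) < m then ((σB (i : ℕ) : ℂ) * ((σQ (i : ℕ) : ℂ))⁻¹) else 0 with hd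
  have hdp : svdDiag n m σB * svdDiagPinv n m σQ = Matrix.diagonal d := diag_mul_pinv σB σQ
  refine ⟨?_, ?_, ?_⟩
  · -- contraction
    show ‖toEuclideanCLM (𝕜 := ℂ) N‖ ≤ 1
    rw [← Matrix.cstar_norm_def]
    have hNeq : N = XB * Matrix.diagonal (Real.sqrt p • d) * XQᴴ := by
      rw [hN, Matrix.mul_assoc XB, hdp, Matrix.diagonal_smul, Matrix.mul_smul, Matrix.smul_mul]
    rw [hNeq]
    have hDnorm : ‖Matrix.diagonal (Real.sqrt p • d)‖ ≤ 1 := by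
      apply norm_diagonal_le _ _ zero_le_one
      intro i
      show ‖Real.sqrt p • d i‖ ≤ 1
      rw [norm_smul, hd]
      by_cases h : (i : ℕ) < m
      · simp only [if_pos h]
        by_cases hq : σQ (i : ℕ) = 0
        · simp [hq, h0 _ hq]
        · have hqpos : 0 < σQ (i : ℕ) := lt_of_le_of_ne (hσQ0 _) (Ne.symm hq)
          have hsb : Real.sqrt p * σB (i : ℕ) ≤ σQ (i : ℕ) := by
            have h1 : Real.sqrt (p * σB (i : ℕ) ^ 2) ≤ Real.sqrt (σQ (i : ℕ) ^ 2) :=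
              Real.sqrt_le_sqrt (hσ _)
            rwa [Real.sqrt_mul hp.le, Real.sqrt_sq (hσB0 _), Real.sqrt_sq (hσQ0 _)] at h1
          have hn : ‖((σB (i : ℕ) : ℂ) * ((σQ (i : ℕ) : ℂ))⁻¹)‖
              = σB (i : ℕ) * (σQ (i : ℕ))⁻¹ := by
            rw [norm_mul, norm_inv, Complex.norm_real, Complex.norm_real, Real.norm_eq_abs,
              Real.norm_eq_abs, abs_of_nonneg (hσB0 _), abs_of_nonneg (hσQ0 _)]
          rw [hn, Real.norm_eq_abs, abs_of_nonneg (Real.sqrt_nonneg _)]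
          rw [← mul_assoc]
          calc Real.sqrt p * σB (i : ℕ) * (σQ (i : ℕ))⁻¹
              ≤ σQ (i : ℕ) * (σQ (i : ℕ))⁻¹ :=
                mul_le_mul_of_nonneg_right hsb (by positivity)
            _ = 1 := mul_inv_cancel₀ hq
      · simp [if_neg h]
    have hXBn : ‖XB‖ ≤ 1 := norm_unitary_le _ hXB
    have hXQn : ‖XQᴴ‖ ≤ 1 := by
      rw [Matrix.l2_opNorm_conjTranspose]
      exact norm_unitary_le _ hXQ
    have e1 := Matrix.l2_opNorm_mul (XB * Matrix.diagonal (Real.sqrt p • d)) XQᴴ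
    have e2 := Matrix.l2_opNorm_mul XB (Matrix.diagonal (Real.sqrt p • d))
    nlinarith [norm_nonneg (XB * Matrix.diagonal (Real.sqrt p • d)), norm_nonneg XQᴴ,
      norm_nonneg XB, norm_nonneg (Matrix.diagonal (Real.sqrt p • d))]
  · -- V is unitary
    have hW1 : Vᵀ * (Vᵀ)ᴴ = 1 := by
      rw [hV, Matrix.conjTranspose_mul, Matrix.conjTranspose_conjTranspose,
        Matrix.mul_assoc, ← Matrix.mul_assoc YB, hYB1, Matrix.one_mul, hYQ2]
    have := congrArg Matrix.transpose hW1
    rw [Matrix.transpose_mul, Matrix.transpose_one] at this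
    have hsw : ((Vᵀ)ᴴ)ᵀ = Vᴴ := by
      ext i j
      rfl
    rw [Matrix.mem_unitaryGroup_iff', Matrix.star_eq_conjTranspose]
    rw [hsw, Matrix.transpose_transpose] at this
    exact this
  · -- the transformation equation
    have key : ∀ Z : Matrix (Fin n) (Fin m) ℂ, XQᴴ * (XQ * Z) = Z := fun Z => by
      rw [← Matrix.mul_assoc, hXQ', Matrix.one_mul]
    have key2 : ∀ Z : Matrix (Fin m) (Fin m) ℂ, YQ * (YQᴴ * Z) = Z := fun Z => by
      rw [← Matrix.mul_assoc, hYQ1, Matrix.one_mul]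
    have h3 : svdDiag n m σB * svdDiagPinv n m σQ * svdDiag n m σQ = svdDiag n m σB := by
      rw [hdp]
      exact diag_prod_eq σB σQ h0
    rw [hN, hQeq, hV, hBeq]
    rw [Matrix.smul_mul, Matrix.smul_mul]
    congr 1
    simp only [Matrix.mul_assoc]
    rw [key, key2]
    congr 1
    calc svdDiag n m σB * (svdDiagPinv n m σQ * (svdDiag n m σQ * YB))
        = svdDiag n m σB * svdDiagPinv n m σQ * svdDiag n m σQ * YB := by
          simp only [Matrix.mul_assoc]
      _ = svdDiag n m σB * YB := by rw [h3]
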